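/- Let C_1,…,C_K and D_1,…,D_K be Hermitian positive definite matrices in ℂ^{m×m}, let ρ > 0, μ ≥ 0, τ > 0, α₁ > 0, α₂ > 0 be real constants, and let w ∈ ℂ^m be nonzero. Define L̃(w) = ρ · Σ_{k=1}^K log₂( (w^H C_k w)/(w^H D_k w) ) − (μ/τ) · [ (1/α₁) · log( Σ_{i=1}^m exp(α₁ |w_i|²) ) + α₂ · log( Σ_{i=1}^m exp(−|w_i|² / α₂) ) ]. Then L̃ is Fréchet differentiable at w over ℝ, and w is a critical point of L̃ (the derivative at w is the zero map) if and only if (ρ / ln 2) · Σ_{k=1}^K ( C_k w / (w^H C_k w) − D_k w / (w^H D_k w) ) − (μ/τ) · ( Σ_{i=1}^m exp(α₁ |w_i|²) · X_i w ) / ( Σ_{i=1}^m exp(α₁ |w_i|²) ) + (μ/τ) · ( Σ_{i=1}^m exp(−|w_i|²/α₂) · X_i w ) / ( Σ_{i=1}^m exp(−|w_i|²/α₂) ) = 0, where X_i w denotes the vector whose i-th entry is w_i and whose other entries are 0. -/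

import Mathlib

open Matrix ComplexOrder

noncomputable def Phi {m : ℕ} (e : Fin m → ℂ) : (Fin m → ℂ) →L[ℝ] ℝ :=
  LinearMap.toContinuousLinearMap
  { toFun := fun v => (star e ⬝ᵥ v).re
    map_add' := by intro v v'; simp [dotProduct_add]
    map_smul' := by
      intro c v
      simp [dotProduct, Finset.mul_sum, Complex.real_smul, mul_left_comm, Complex.re_sum] }

@[simp] lemma Phi_apply {m : ℕ} (e v : Fin m → ℂ) : Phi e v = (star e ⬝ᵥ v).re := rfl

lemma Phi_add {m : ℕ} (e f : Fin m → ℂ) : Phi (e + f) = Phi e + Phi f := by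
  ext v; simp [add_dotProduct]

lemma Phi_sub {m : ℕ} (e f : Fin m → ℂ) : Phi (e - f) = Phi e - Phi f := by
  ext v; simp [sub_dotProduct]

lemma Phi_smul {m : ℕ} (a : ℝ) (e : Fin m → ℂ) : Phi (a • e) = a • Phi e := by
  ext v
  simp [dotProduct, Complex.real_smul, Finset.mul_sum, Complex.re_sum, mul_assoc]

lemma Phi_sum {m n : ℕ} (e : Fin n → (Fin m → ℂ)) : Phi (∑ i, e i) = ∑ i, Phi (e i) := by
  ext v
  simp only [Phi_apply, ContinuousLinearMap.coe_sum', Finset.sum_apply, star_sum]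
  simp [dotProduct, Complex.re_sum, Finset.sum_mul]
  exact Finset.sum_comm

lemma Phi_eq_zero_iff {m : ℕ} (e : Fin m → ℂ) : Phi e = 0 ↔ e = 0 := by
  constructor
  · intro h
    funext j
    have := congrArg (fun L => L e) h
    simp only [Phi_apply, ContinuousLinearMap.zero_apply] at this
    have h2 : ∑ i, Complex.normSq (e i) = 0 := by
      rw [← this]
      simp only [dotProduct, Complex.re_sum, Pi.star_apply]
      congr 1; funext i
      rw [show star (e i) = starRingEnd ℂ (e i) from rfl, ← Complex.normSq_eq_conj_mul_self, Complex.ofReal_re]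
    have := (Finset.sum_eq_zero_iff_of_nonneg (by intro i _; exact Complex.normSq_nonneg _)).1 h2 j (by simp)
    exact Complex.normSq_eq_zero.mp this
  · intro h; subst h; ext v; simp

noncomputable def MvA {m : ℕ} (A : Matrix (Fin m) (Fin m) ℂ) : (Fin m → ℂ) →L[ℝ] (Fin m → ℂ) :=
  (LinearMap.toContinuousLinearMap (Matrix.mulVecLin A)).restrictScalars ℝ

@[simp] lemma MvA_apply {m : ℕ} (A : Matrix (Fin m) (Fin m) ℂ) (v : Fin m → ℂ) :
    MvA A v = A *ᵥ v := rfl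

noncomputable def projC {m : ℕ} (i : Fin m) : (Fin m → ℂ) →L[ℝ] ℂ := ContinuousLinearMap.proj i

noncomputable def conjL : ℂ →L[ℝ] ℂ := Complex.conjCLE.toContinuousLinearMap

lemma hasFDerivAt_quad {m : ℕ} (A : Matrix (Fin m) (Fin m) ℂ) (hA : A.IsHermitian)
    (w : Fin m → ℂ) :
    HasFDerivAt (fun g : Fin m → ℂ => (star g ⬝ᵥ A *ᵥ g).re) ((2:ℝ) • Phi (A *ᵥ w)) w := by
  have h1 : ∀ i : Fin m, HasFDerivAt (fun g : Fin m → ℂ => star (g i) * (A *ᵥ g) i)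
      (star (w i) • ((projC i).comp (MvA A)) + (A *ᵥ w) i • (conjL.comp (projC i))) w := by
    intro i
    have hc : HasFDerivAt (fun g : Fin m → ℂ => star (g i)) (conjL.comp (projC i)) w :=
      (conjL.comp (projC i)).hasFDerivAt
    have hd : HasFDerivAt (fun g : Fin m → ℂ => (A *ᵥ g) i) ((projC i).comp (MvA A)) w :=
      ((projC i).comp (MvA A)).hasFDerivAt
    exact hc.mul hd
  have h2 : HasFDerivAt (fun g : Fin m → ℂ => ∑ i, star (g i) * (A *ᵥ g) i)
      (∑ i, (star (w i) • ((projC i).comp (MvA A)) + (A *ᵥ w) i • (conjL.comp (projC i)))) w :=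
    HasFDerivAt.fun_sum fun i _ => h1 i
  have h3 := (Complex.reCLM.hasFDerivAt).comp w h2
  have hfun : (fun g : Fin m → ℂ => (star g ⬝ᵥ A *ᵥ g).re)
      = (Complex.reCLM ∘ fun g : Fin m → ℂ => ∑ i, star (g i) * (A *ᵥ g) i) := rfl
  rw [hfun]
  refine h3.congr_fderiv ?_
  ext v
  have key : (∑ i, (star (w i) • ((projC i).comp (MvA A)) + (A *ᵥ w) i • (conjL.comp (projC i)))) v
      = star (A *ᵥ w) ⬝ᵥ v + star (star (A *ᵥ w) ⬝ᵥ v) := by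
    simp only [ContinuousLinearMap.coe_sum', Finset.sum_apply, ContinuousLinearMap.add_apply,
      ContinuousLinearMap.coe_smul', Pi.smul_apply, ContinuousLinearMap.comp_apply]
    rw [Finset.sum_add_distrib]
    congr 1
    · have : star (A *ᵥ w) ⬝ᵥ v = star w ⬝ᵥ (A *ᵥ v) := by
        rw [star_mulVec, hA.eq, dotProduct_mulVec]
      rw [this]
      rfl
    · have : star (star (A *ᵥ w) ⬝ᵥ v) = star v ⬝ᵥ (A *ᵥ w) := by
        rw [star_dotProduct, star_star]
      rw [this]
      simp [dotProduct, mul_comm, conjL, projC, smul_eq_mul]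
  simp only [ContinuousLinearMap.comp_apply, key, ContinuousLinearMap.smul_apply, Phi_apply]
  simp [Complex.add_re, two_mul]

lemma stdBasis_mulVec {m : ℕ} (i : Fin m) (w : Fin m → ℂ) :
    (Matrix.single i i (1:ℂ)) *ᵥ w = fun j => if j = i then w i else 0 := by
  funext j
  simp only [Matrix.mulVec, Matrix.single, Matrix.of_apply, dotProduct, ite_mul, one_mul,
    zero_mul]
  rw [Finset.sum_eq_single i (fun b _ hb => by simp [Ne.symm hb]) (by simp)]
  rcases eq_or_ne j i with h | h
  · simp [h]
  · simp [h, Ne.symm h]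

lemma hasFDerivAt_normSq {m : ℕ} (w : Fin m → ℂ) (i : Fin m) :
    HasFDerivAt (fun g : Fin m → ℂ => ‖g i‖^2)
      ((2:ℝ) • Phi (fun j => if j = i then w i else 0)) w := by
  have hherm : (Matrix.single i i (1:ℂ)).IsHermitian := by
    ext a b
    simp [Matrix.conjTranspose_apply, Matrix.single]
    by_cases h1 : i = a <;> by_cases h2 : i = b <;> simp [h1, h2]
  have h := hasFDerivAt_quad (Matrix.single i i (1:ℂ)) hherm w
  rw [stdBasis_mulVec] at h
  have hfun : (fun g : Fin m → ℂ => ‖g i‖^2)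
      = fun g : Fin m → ℂ => (star g ⬝ᵥ (Matrix.single i i (1:ℂ)) *ᵥ g).re := by
    funext g
    rw [stdBasis_mulVec]
    have : star g ⬝ᵥ (fun j => if j = i then g i else 0) = star (g i) * g i := by
      simp only [dotProduct, mul_ite, mul_zero]
      rw [Finset.sum_eq_single i (fun b _ hb => by simp [hb]) (by simp)]
      simp
    rw [this, show star (g i) = starRingEnd ℂ (g i) from rfl, ← Complex.normSq_eq_conj_mul_self]
    simp [Complex.sq_norm]
  rw [hfun]
  exact h
open Matrix ComplexOrder

lemma hasFDerivAt_logquot {m : ℕ} (A B : Matrix (Fin m) (Fin m) ℂ) (w : Fin m → ℂ)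
    (hA : A.IsHermitian) (hB : B.IsHermitian)
    (hqA : 0 < (star w ⬝ᵥ A *ᵥ w).re) (hqB : 0 < (star w ⬝ᵥ B *ᵥ w).re) :
    HasFDerivAt (fun g : Fin m → ℂ =>
        Real.logb 2 ((star g ⬝ᵥ A *ᵥ g).re / (star g ⬝ᵥ B *ᵥ g).re))
      (Phi ((2 / Real.log 2) • (((star w ⬝ᵥ A *ᵥ w).re)⁻¹ • (A *ᵥ w)
        - ((star w ⬝ᵥ B *ᵥ w).re)⁻¹ • (B *ᵥ w)))) w := by
  have hqA' := hasFDerivAt_quad A hA w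
  have hqB' := hasFDerivAt_quad B hB w
  have hA' : ∀ᶠ g in nhds w, 0 < (star g ⬝ᵥ A *ᵥ g).re :=
    hqA'.continuousAt.eventually_mem (Ioi_mem_nhds hqA)
  have hB' : ∀ᶠ g in nhds w, 0 < (star g ⬝ᵥ B *ᵥ g).re :=
    hqB'.continuousAt.eventually_mem (Ioi_mem_nhds hqB)
  have hnice := (((hqA'.log hqA.ne').sub (hqB'.log hqB.ne')).const_mul (Real.log 2)⁻¹)
  have heq : (fun g : Fin m → ℂ =>
        Real.logb 2 ((star g ⬝ᵥ A *ᵥ g).re / (star g ⬝ᵥ B *ᵥ g).re))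
      =ᶠ[nhds w] fun g : Fin m → ℂ => (Real.log 2)⁻¹ *
        (Real.log ((star g ⬝ᵥ A *ᵥ g).re) - Real.log ((star g ⬝ᵥ B *ᵥ g).re)) := by
    filter_upwards [hA', hB'] with g h1 h2
    rw [Real.logb, Real.log_div h1.ne' h2.ne', div_eq_inv_mul]
  have h := hnice.congr_of_eventuallyEq heq
  refine h.congr_fderiv ?_
  rw [Phi_smul, Phi_sub, Phi_smul, Phi_smul]
  ext v
  simp only [ContinuousLinearMap.smul_apply, ContinuousLinearMap.sub_apply, smul_eq_mul]
  ring

set_option maxHeartbeats 1000000 in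
lemma hasFDerivAt_explog1 {m : ℕ} (w : Fin m → ℂ) (α₁ : ℝ) (hα₁ : 0 < α₁)
    (hS : 0 < ∑ i, Real.exp (α₁ * ‖w i‖ ^ 2)) :
    HasFDerivAt (fun g : Fin m → ℂ => (1/α₁) * Real.log (∑ i, Real.exp (α₁ * ‖g i‖ ^ 2)))
      (Phi ((2:ℝ) • ((∑ i, Real.exp (α₁ * ‖w i‖ ^ 2))⁻¹ •
        ∑ i, Real.exp (α₁ * ‖w i‖ ^ 2) • (fun j => if j = i then w i else 0 : Fin m → ℂ)))) w := by
  have hterm : ∀ i : Fin m, HasFDerivAt (fun g : Fin m → ℂ => Real.exp (α₁ * ‖g i‖ ^ 2))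
      (Real.exp (α₁ * ‖w i‖ ^ 2) • (α₁ • ((2:ℝ) • Phi (fun j => if j = i then w i else 0)))) w :=
    fun i => ((hasFDerivAt_normSq w i).const_mul α₁).exp
  have hsum := HasFDerivAt.fun_sum (fun i (_ : i ∈ Finset.univ) => hterm i)
  have hlog := (hsum.log hS.ne').const_mul (1/α₁)
  refine hlog.congr_fderiv ?_
  rw [Phi_smul, Phi_smul, Phi_sum]
  simp only [Phi_smul]
  have hre : ∀ i : Fin m, Real.exp (α₁ * ‖w i‖ ^ 2) • α₁ •
        ((2:ℝ) • Phi (fun j => if j = i then w i else 0 : Fin m → ℂ))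
      = (α₁ * 2) • (Real.exp (α₁ * ‖w i‖ ^ 2) •
          Phi (fun j => if j = i then w i else 0 : Fin m → ℂ)) := by
    intro i
    rw [smul_smul, smul_smul, smul_smul]
    congr 1
    ring
  simp only [hre]
  rw [← Finset.smul_sum, smul_smul, smul_smul, smul_smul]
  congr 1
  have h0 : α₁ ≠ 0 := ne_of_gt hα₁
  have hx : (1:ℝ)/α₁ * (α₁ * 2) = 2 := by field_simp
  linear_combination ((∑ i, Real.exp (α₁ * ‖w i‖ ^ 2))⁻¹ : ℝ) * hx

set_option maxHeartbeats 1000000 in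
lemma hasFDerivAt_explog2 {m : ℕ} (w : Fin m → ℂ) (α₂ : ℝ) (hα₂ : 0 < α₂)
    (hS : 0 < ∑ i, Real.exp (-‖w i‖ ^ 2 / α₂)) :
    HasFDerivAt (fun g : Fin m → ℂ => α₂ * Real.log (∑ i, Real.exp (-‖g i‖ ^ 2 / α₂)))
      (Phi ((-2:ℝ) • ((∑ i, Real.exp (-‖w i‖ ^ 2 / α₂))⁻¹ •
        ∑ i, Real.exp (-‖w i‖ ^ 2 / α₂) • (fun j => if j = i then w i else 0 : Fin m → ℂ)))) w := by
  have hterm : ∀ i : Fin m, HasFDerivAt (fun g : Fin m → ℂ => Real.exp (-‖g i‖ ^ 2 / α₂))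
      (Real.exp (-‖w i‖ ^ 2 / α₂) • ((-(1/α₂)) • ((2:ℝ) • Phi (fun j => if j = i then w i else 0)))) w := by
    intro i
    have h1 := ((hasFDerivAt_normSq w i).const_mul (-(1/α₂))).exp
    have hfun : (fun g : Fin m → ℂ => Real.exp (-‖g i‖ ^ 2 / α₂))
        = fun g : Fin m → ℂ => Real.exp (-(1/α₂) * ‖g i‖ ^ 2) := by
      funext g; congr 1; ring
    rw [hfun]
    have hval : -‖w i‖ ^ 2 / α₂ = -(1/α₂) * ‖w i‖ ^ 2 := by ring
    rw [hval]
    exact h1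
  have hsum := HasFDerivAt.fun_sum (fun i (_ : i ∈ Finset.univ) => hterm i)
  have hlog := (hsum.log hS.ne').const_mul α₂
  refine hlog.congr_fderiv ?_
  rw [Phi_smul, Phi_smul, Phi_sum]
  simp only [Phi_smul]
  have hre : ∀ i : Fin m, Real.exp (-‖w i‖ ^ 2 / α₂) • (-(1/α₂)) •
        ((2:ℝ) • Phi (fun j => if j = i then w i else 0 : Fin m → ℂ))
      = (-(2/α₂)) • (Real.exp (-‖w i‖ ^ 2 / α₂) •
          Phi (fun j => if j = i then w i else 0 : Fin m → ℂ)) := by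
    intro i
    rw [smul_smul, smul_smul, smul_smul]
    congr 1
    ring
  simp only [hre]
  rw [← Finset.smul_sum, smul_smul, smul_smul, smul_smul]
  congr 1
  have h0 : α₂ ≠ 0 := ne_of_gt hα₂
  have hx : α₂ * -((1:ℝ)/α₂) * 2 = -2 := by field_simp
  linear_combination ((∑ i, Real.exp (-‖w i‖ ^ 2 / α₂))⁻¹ : ℝ) * hx

lemma herm_dot_real {m : ℕ} {A : Matrix (Fin m) (Fin m) ℂ} (hA : A.IsHermitian) (g : Fin m → ℂ) :
    (star g ⬝ᵥ A *ᵥ g) = (((star g ⬝ᵥ A *ᵥ g).re : ℝ) : ℂ) := by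
  have h : (starRingEnd ℂ) (star g ⬝ᵥ A *ᵥ g) = star g ⬝ᵥ A *ᵥ g := by
    show star (star g ⬝ᵥ A *ᵥ g) = star g ⬝ᵥ A *ᵥ g
    conv_lhs => rw [star_dotProduct, star_star, star_mulVec, hA.eq, ← dotProduct_mulVec]
  exact (Complex.conj_eq_iff_re.mp h).symm

lemma ofReal_smul_pi {m : ℕ} (r : ℝ) (x : Fin m → ℂ) : ((r : ℂ)) • x = r • x := by
  funext j
  simp [Complex.real_smul]

set_option maxHeartbeats 1000000 in
theorem stmt14 {m K : ℕ} (C D : Fin K → Matrix (Fin m) (Fin m) ℂ)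
    (hC : ∀ k, (C k).PosDef) (hD : ∀ k, (D k).PosDef)
    (ρ μ τ α₁ α₂ : ℝ) (hρ : 0 < ρ) (hμ : 0 ≤ μ) (hτ : 0 < τ)
    (hα₁ : 0 < α₁) (hα₂ : 0 < α₂)
    (w : Fin m → ℂ) (hw : w ≠ 0) :
    let Lt : (Fin m → ℂ) → ℝ := fun g =>
      ρ * (∑ k, Real.logb 2 (((star g ⬝ᵥ (C k) *ᵥ g) / (star g ⬝ᵥ (D k) *ᵥ g)).re))
        - (μ / τ) * ((1 / α₁) * Real.log (∑ i, Real.exp (α₁ * ‖g i‖ ^ 2))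
            + α₂ * Real.log (∑ i, Real.exp (-‖g i‖ ^ 2 / α₂)))
    DifferentiableAt ℝ Lt w ∧
      (fderiv ℝ Lt w = 0 ↔
        (ρ / Real.log 2) • (∑ k, ((star w ⬝ᵥ (C k) *ᵥ w)⁻¹ • ((C k) *ᵥ w)
              - (star w ⬝ᵥ (D k) *ᵥ w)⁻¹ • ((D k) *ᵥ w)))
          - (μ / τ) • ((∑ i, Real.exp (α₁ * ‖w i‖ ^ 2))⁻¹ •
              ∑ i, Real.exp (α₁ * ‖w i‖ ^ 2) •
                (fun j => if j = i then w i else 0 : Fin m → ℂ))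
          + (μ / τ) • ((∑ i, Real.exp (-‖w i‖ ^ 2 / α₂))⁻¹ •
              ∑ i, Real.exp (-‖w i‖ ^ 2 / α₂) •
                (fun j => if j = i then w i else 0 : Fin m → ℂ))
          = 0) := by
  intro Lt
  obtain ⟨i0, hi0⟩ := Function.ne_iff.mp hw
  haveI : Nonempty (Fin m) := ⟨i0⟩
  have hqC : ∀ k, 0 < (star w ⬝ᵥ C k *ᵥ w).re := fun k => by
    simpa using (hC k).re_dotProduct_pos hw
  have hqD : ∀ k, 0 < (star w ⬝ᵥ D k *ᵥ w).re := fun k => by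
    simpa using (hD k).re_dotProduct_pos hw
  have hS1 : 0 < ∑ i, Real.exp (α₁ * ‖w i‖ ^ 2) :=
    Finset.sum_pos (fun i _ => Real.exp_pos _) Finset.univ_nonempty
  have hS2 : 0 < ∑ i, Real.exp (-‖w i‖ ^ 2 / α₂) :=
    Finset.sum_pos (fun i _ => Real.exp_pos _) Finset.univ_nonempty
  have hLt : Lt = fun g : Fin m → ℂ =>
      ρ * (∑ k, Real.logb 2 ((star g ⬝ᵥ C k *ᵥ g).re / (star g ⬝ᵥ D k *ᵥ g).re))
        - (μ / τ) * ((1 / α₁) * Real.log (∑ i, Real.exp (α₁ * ‖g i‖ ^ 2))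
            + α₂ * Real.log (∑ i, Real.exp (-‖g i‖ ^ 2 / α₂))) := by
    funext g
    show ρ * (∑ k, Real.logb 2 (((star g ⬝ᵥ (C k) *ᵥ g) / (star g ⬝ᵥ (D k) *ᵥ g)).re)) - _ = _
    congr 2
    refine Finset.sum_congr rfl fun k _ => ?_
    congr 1
    conv_lhs => rw [herm_dot_real (hD k).1 g]
    rw [Complex.div_ofReal_re]
  -- the derivative
  have h1 := HasFDerivAt.fun_sum (fun k (_ : k ∈ Finset.univ) =>
    hasFDerivAt_logquot (C k) (D k) w (hC k).1 (hD k).1 (hqC k) (hqD k))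
  have h1' := h1.const_mul ρ
  have h2 := hasFDerivAt_explog1 w α₁ hα₁ hS1
  have h3 := hasFDerivAt_explog2 w α₂ hα₂ hS2
  have h23 := (h2.fun_add h3).const_mul (μ / τ)
  have hfull := h1'.fun_sub h23
  rw [← Phi_sum, ← Phi_smul, ← Phi_add, ← Phi_smul, ← Phi_sub] at hfull
  rw [hLt] at *
  refine ⟨hfull.differentiableAt, ?_⟩
  rw [hfull.fderiv, Phi_eq_zero_iff]
  -- translate statement vector
  have hCs : ∀ k, (star w ⬝ᵥ C k *ᵥ w)⁻¹ • (C k *ᵥ w)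
      = ((star w ⬝ᵥ C k *ᵥ w).re)⁻¹ • (C k *ᵥ w) := by
    intro k
    conv_lhs => rw [herm_dot_real (hC k).1 w]
    rw [← Complex.ofReal_inv, ofReal_smul_pi]
  have hDs : ∀ k, (star w ⬝ᵥ D k *ᵥ w)⁻¹ • (D k *ᵥ w)
      = ((star w ⬝ᵥ D k *ᵥ w).re)⁻¹ • (D k *ᵥ w) := by
    intro k
    conv_lhs => rw [herm_dot_real (hD k).1 w]
    rw [← Complex.ofReal_inv, ofReal_smul_pi]
  simp only [hCs, hDs]
  have hkey : (ρ • ∑ k, (2 / Real.log 2) •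
        (((star w ⬝ᵥ C k *ᵥ w).re)⁻¹ • (C k *ᵥ w) - ((star w ⬝ᵥ D k *ᵥ w).re)⁻¹ • (D k *ᵥ w))
      - (μ / τ) • ((2:ℝ) • ((∑ i, Real.exp (α₁ * ‖w i‖ ^ 2))⁻¹ •
          ∑ i, Real.exp (α₁ * ‖w i‖ ^ 2) • (fun j => if j = i then w i else 0 : Fin m → ℂ))
        + (-2:ℝ) • ((∑ i, Real.exp (-‖w i‖ ^ 2 / α₂))⁻¹ •
          ∑ i, Real.exp (-‖w i‖ ^ 2 / α₂) • (fun j => if j = i then w i else 0 : Fin m → ℂ))))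
      = (2:ℝ) • ((ρ / Real.log 2) • (∑ k, (((star w ⬝ᵥ C k *ᵥ w).re)⁻¹ • (C k *ᵥ w)
            - ((star w ⬝ᵥ D k *ᵥ w).re)⁻¹ • (D k *ᵥ w)))
          - (μ / τ) • ((∑ i, Real.exp (α₁ * ‖w i‖ ^ 2))⁻¹ •
              ∑ i, Real.exp (α₁ * ‖w i‖ ^ 2) • (fun j => if j = i then w i else 0 : Fin m → ℂ))
          + (μ / τ) • ((∑ i, Real.exp (-‖w i‖ ^ 2 / α₂))⁻¹ •
              ∑ i, Real.exp (-‖w i‖ ^ 2 / α₂) • (fun j => if j = i then w i else 0 : Fin m → ℂ))) := by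
    rw [← Finset.smul_sum]
    module
  rw [hkey, smul_eq_zero]
  norm_num
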